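/- Let n ≥ 1 and let A be an n×n real matrix that is entrywise nonnegative, irreducible in the sense that for every pair of indices i, j there exists m ≥ 1 with (A ^ m) i j > 0, whose every column sum satisfies ∑_{i} A i j ≤ 1, and which has at least one column j₀ with ∑_{i} A i j₀ < 1. Then every complex eigenvalue λ of A (every root λ ∈ ℂ of the characteristic polynomial of A.map Complex.ofReal) satisfies |λ| < 1; i.e., the spectral radius of A is strictly less than 1. -/

import Mathlib

open Matrix Polynomial in
lemma eig_of_root {n : ℕ} (B : Matrix (Fin n) (Fin n) ℂ) {lam : ℂ}
    (h : B.charpoly.IsRoot lam) :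
    ∃ v : Fin n → ℂ, v ≠ 0 ∧ B.mulVec v = lam • v := by
  have hd : (lam • (1 : Matrix (Fin n) (Fin n) ℂ) - B).det = 0 := by
    have := h
    rw [Polynomial.IsRoot, Matrix.charpoly, ← coe_evalRingHom, RingHom.map_det] at this
    rw [← this]
    congr 1
    ext i j
    by_cases hij : i = j
    · subst hij; simp [charmatrix_apply_eq, Matrix.smul_apply, Matrix.one_apply]
    · simp [charmatrix_apply_ne _ _ _ hij, Matrix.smul_apply, Matrix.one_apply_ne hij,
        Matrix.sub_apply]
  obtain ⟨v, hv0, hv⟩ := (Matrix.exists_mulVec_eq_zero_iff).2 hd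
  refine ⟨v, hv0, ?_⟩
  have := hv
  rw [Matrix.sub_mulVec, sub_eq_zero] at this
  rw [← this, Matrix.smul_mulVec, Matrix.one_mulVec]

lemma pow_entry_nonneg {n : ℕ} (A : Matrix (Fin n) (Fin n) ℝ)
    (hA : ∀ i j, 0 ≤ A i j) : ∀ m i j, 0 ≤ (A ^ m) i j := by
  intro m
  induction m with
  | zero => intro i j; by_cases h : i = j <;> simp [pow_zero, Matrix.one_apply, h]
  | succ m ih =>
      intro i j
      rw [pow_succ, Matrix.mul_apply]
      exact Finset.sum_nonneg fun k _ => mul_nonneg (ih i k) (hA k j)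


/-- If `A` is entrywise nonnegative, irreducible (for every `i, j` there is
`m ≥ 1` with `(A^m) i j > 0`), with every column sum at most `1` and at least
one column sum strictly less than `1`, then every complex eigenvalue of `A`
has modulus strictly less than `1`. -/
theorem irreducible_substochastic_spectral_radius_lt_one
    (n : ℕ) (hn : 1 ≤ n)
    (A : Matrix (Fin n) (Fin n) ℝ)
    (hA : ∀ i j, 0 ≤ A i j)
    (hirr : ∀ i j : Fin n, ∃ m : ℕ, 1 ≤ m ∧ 0 < (A ^ m) i j)
    (hcol : ∀ j, ∑ i, A i j ≤ 1)
    (hdef : ∃ j₀, ∑ i, A i j₀ < 1) :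
    ∀ lam : ℂ, ((A.map Complex.ofReal).charpoly).IsRoot lam →
      ‖lam‖ < 1 := by
  intro lam hroot
  by_contra hge
  push_neg at hge
  obtain ⟨v, hv0, hv⟩ := eig_of_root (A.map Complex.ofReal) hroot
  set r : ℝ := ‖lam‖ with hr
  set x : Fin n → ℝ := fun i => ‖v i‖ with hxdef
  have hxnn : ∀ i, 0 ≤ x i := fun i => norm_nonneg _
  -- key inequality
  have hkey : ∀ i, r * x i ≤ ∑ j, A i j * x j := by
    intro i
    have h1 : lam * v i = ∑ j, (A i j : ℂ) * v j := by
      have h := congrFun hv i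
      simp only [Matrix.mulVec, dotProduct, Matrix.map_apply, Pi.smul_apply,
        smul_eq_mul] at h
      exact h.symm
    have h2 : r * x i = ‖∑ j, (A i j : ℂ) * v j‖ := by
      rw [← h1, norm_mul]
    rw [h2]
    calc ‖∑ j, (A i j : ℂ) * v j‖ ≤ ∑ j, ‖(A i j : ℂ) * v j‖ :=
          norm_sum_le _ _
      _ = ∑ j, A i j * x j := by
          refine Finset.sum_congr rfl fun j _ => ?_
          rw [norm_mul, Complex.norm_real, Real.norm_of_nonneg (hA i j)]
  -- positivity of total sum
  obtain ⟨i0, hi0⟩ : ∃ i0, v i0 ≠ 0 := Function.ne_iff.mp hv0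
  have hxi0 : 0 < x i0 := by simpa [hxdef] using (norm_pos_iff.mpr hi0)
  set S : ℝ := ∑ i, x i with hS
  have hS0 : 0 < S :=
    Finset.sum_pos' (fun i _ => hxnn i) ⟨i0, Finset.mem_univ _, hxi0⟩
  -- sum of the key inequality
  have hswap : ∑ i, ∑ j, A i j * x j = ∑ j, (∑ i, A i j) * x j := by
    rw [Finset.sum_comm]
    exact Finset.sum_congr rfl fun j _ => (Finset.sum_mul _ _ _).symm
  have h2 : r * S ≤ ∑ j, (∑ i, A i j) * x j := by
    rw [hS, Finset.mul_sum, ← hswap]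
    exact Finset.sum_le_sum fun i _ => hkey i
  have h3 : ∑ j, (∑ i, A i j) * x j ≤ S := by
    rw [hS]
    exact Finset.sum_le_sum fun j _ => by
      nlinarith [hcol j, hxnn j]
  have h4 : S ≤ r * S := le_mul_of_one_le_left hS0.le hge
  have heqS : ∑ j, (∑ i, A i j) * x j = S := le_antisymm h3 (h4.trans h2)
  have heqrS : r * S = S := le_antisymm (h2.trans h3) h4
  -- componentwise equality
  have hcomp : ∀ i, ∑ j, A i j * x j = r * x i := by
    have hzero : ∑ i, ((∑ j, A i j * x j) - r * x i) = 0 := by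
      rw [Finset.sum_sub_distrib, hswap, heqS, ← Finset.mul_sum, ← hS, heqrS, sub_self]
    intro i
    have := (Finset.sum_eq_zero_iff_of_nonneg
      (fun i _ => sub_nonneg.mpr (hkey i))).mp hzero i (Finset.mem_univ i)
    linarith [sub_eq_zero.mp this]
  -- x j₀ = 0
  obtain ⟨j₀, hj₀⟩ := hdef
  have hx0 : x j₀ = 0 := by
    have hzero : ∑ j, (1 - ∑ i, A i j) * x j = 0 := by
      have : ∑ j, (1 - ∑ i, A i j) * x j = S - ∑ j, (∑ i, A i j) * x j := by
        rw [hS, ← Finset.sum_sub_distrib]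
        exact Finset.sum_congr rfl fun j _ => by ring
      rw [this, heqS, sub_self]
    have := (Finset.sum_eq_zero_iff_of_nonneg
      (fun j _ => mul_nonneg (by linarith [hcol j]) (hxnn j))).mp hzero j₀ (Finset.mem_univ j₀)
    rcases mul_eq_zero.mp this with h | h
    · linarith
    · exact h
  -- x is an eigenvector of A with eigenvalue r
  have hAx : A.mulVec x = r • x := by
    ext i
    simp only [Matrix.mulVec, dotProduct, Pi.smul_apply, smul_eq_mul]
    exact hcomp i
  have hpow : ∀ m, (A ^ m).mulVec x = (r ^ m) • x := by
    intro m
    induction m with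
    | zero => simp [pow_zero, Matrix.one_mulVec]
    | succ m ih =>
        rw [pow_succ, ← Matrix.mulVec_mulVec, hAx, Matrix.mulVec_smul, ih,
          smul_smul, ← pow_succ']
  obtain ⟨m, hm1, hm⟩ := hirr j₀ i0
  have hpos : 0 < ((A ^ m).mulVec x) j₀ := by
    simp only [Matrix.mulVec, dotProduct]
    exact Finset.sum_pos' (fun k _ => mul_nonneg (pow_entry_nonneg A hA m j₀ k) (hxnn k))
      ⟨i0, Finset.mem_univ _, mul_pos hm hxi0⟩
  rw [hpow] at hpos
  simp only [Pi.smul_apply, smul_eq_mul, hx0, mul_zero] at hpos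
  exact lt_irrefl 0 hpos
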